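/- Let T be a finite rooted tree in which every node is colored black or white, such that every leaf is black and every non-root node with exactly one child is black. Then the number of white nodes is at most the number of black nodes; moreover if the root is black or has at least two children, the number of white nodes is at most the number of black nodes minus one. -/

import Mathlib

open Finset

/-- A finite rooted tree given by a parent function: the root is a fixed point of `parent`
and every node reaches the root by iterating `parent`. -/
structure ParentTree (α : Type*) where
  root : α
  parent : α → α
  root_fix : parent root = root
  reach : ∀ v, ∃ n, parent^[n] v = root

variable {α : Type*} [Fintype α] [DecidableEq α]

/-- The children of a node `v`. -/
def children (T : ParentTree α) (v : α) : Finset α :=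
  Finset.univ.filter (fun u => u ≠ T.root ∧ T.parent u = v)

/-- `u` is a (weak) descendant of `v`. -/
def IsDesc (T : ParentTree α) (u v : α) : Prop :=
  ∃ n, T.parent^[n] u = v

/-- The edges of the tree are identified with the non-root nodes (each non-root node `v`
corresponds to the edge `{v, parent v}`, of which `v` is the lower endpoint). -/
def edgeNodes (T : ParentTree α) : Finset α :=
  Finset.univ.filter (fun v => v ≠ T.root)

/-- The set of black nodes, given a coloring `black : α → Bool`. -/
def blackNodes (T : ParentTree α) (black : α → Bool) : Finset α :=
  Finset.univ.filter (fun v => black v = true)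

/-- The set of white nodes. -/
def whiteNodes (T : ParentTree α) (black : α → Bool) : Finset α :=
  Finset.univ.filter (fun v => black v = false)

/-- The set of leaves. -/
def leaves (T : ParentTree α) : Finset α :=
  Finset.univ.filter (fun v => children T v = ∅)

/-- A black-white tree: every leaf is black, and every non-root node with exactly one
child is black. -/
def BlackWhite (T : ParentTree α) (black : α → Bool) : Prop :=
  (∀ v, children T v = ∅ → black v = true) ∧
  (∀ v, v ≠ T.root → (children T v).card = 1 → black v = true)

theorem stmt9 (T : ParentTree α) (black : α → Bool) (hbw : BlackWhite T black) :
    (whiteNodes T black).card ≤ (blackNodes T black).card ∧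
    ((black T.root = true ∨ 2 ≤ (children T T.root).card) →
      (whiteNodes T black).card ≤ (blackNodes T black).card - 1) := by
  classical
  set W := (whiteNodes T black).card with hW
  set B := (blackNodes T black).card with hB
  -- total edge count
  have hedge : ∑ v, (children T v).card = (edgeNodes T).card := by
    rw [Finset.card_eq_sum_card_fiberwise (f := T.parent) (t := Finset.univ)
      (fun x _ => Finset.mem_univ _)]
    refine Finset.sum_congr rfl fun v _ => ?_
    congr 1
    ext u
    simp [edgeNodes, children, Finset.mem_filter]
  have hne : (Finset.univ : Finset α).Nonempty := ⟨T.root, Finset.mem_univ _⟩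
  have hcard : (edgeNodes T).card = Fintype.card α - 1 := by
    have h := Finset.card_filter_add_card_filter_not
      (s := (Finset.univ : Finset α)) (p := fun v => v = T.root)
    have h1 : (Finset.univ.filter (fun v => v = T.root)) = {T.root} := by
      ext u; simp
    rw [h1] at h
    simp only [Finset.card_singleton, Finset.card_univ] at h
    have : (edgeNodes T).card = Finset.card (Finset.univ.filter (fun v => ¬ v = T.root)) := by
      rfl
    omega
  have hWBcard : W + B = Fintype.card α := by
    have h := Finset.card_filter_add_card_filter_not
      (s := (Finset.univ : Finset α)) (p := fun v => black v = false)
    have h2 : (Finset.univ.filter (fun v => ¬ black v = false)) = blackNodes T black := by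
      ext u; simp [blackNodes]
    rw [h2] at h
    rw [Finset.card_univ] at h
    exact h
  have hn1 : 1 ≤ Fintype.card α := Fintype.card_pos_iff.mpr ⟨T.root⟩
  -- white sum bound
  have hsum : ∑ v ∈ whiteNodes T black, (children T v).card ≤ Fintype.card α - 1 := by
    calc ∑ v ∈ whiteNodes T black, (children T v).card
        ≤ ∑ v, (children T v).card :=
          Finset.sum_le_sum_of_subset (Finset.subset_univ _)
      _ = Fintype.card α - 1 := by rw [hedge, hcard]
  -- white non-root nodes have ≥ 2 children
  have hwhite2 : ∀ v ∈ whiteNodes T black, v ≠ T.root → 2 ≤ (children T v).card := by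
    intro v hv hvr
    simp only [whiteNodes, Finset.mem_filter, Finset.mem_univ, true_and] at hv
    by_contra h
    push_neg at h
    interval_cases hc : (children T v).card
    · exact absurd (hbw.1 v (Finset.card_eq_zero.mp hc)) (by simp [hv])
    · exact absurd (hbw.2 v hvr hc) (by simp [hv])
  by_cases hroot : black T.root = true
  · -- root is black: all white nodes have ≥ 2 children
    have h2W : 2 * W ≤ ∑ v ∈ whiteNodes T black, (children T v).card := by
      calc 2 * W = ∑ _v ∈ whiteNodes T black, 2 := by rw [Finset.sum_const]; ring
        _ ≤ ∑ v ∈ whiteNodes T black, (children T v).card := by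
            apply Finset.sum_le_sum
            intro v hv
            apply hwhite2 v hv
            intro hvr
            subst hvr
            simp [whiteNodes, hroot] at hv
    constructor
    · omega
    · intro _; omega
  · -- root is white
    have hrw : T.root ∈ whiteNodes T black := by
      simp [whiteNodes]
      revert hroot; cases black T.root <;> simp
    have hr1 : 1 ≤ (children T T.root).card := by
      rcases Finset.eq_empty_or_nonempty (children T T.root) with h | h
      · exact absurd (hbw.1 _ h) (by revert hroot; cases black T.root <;> simp)
      · exact Finset.card_pos.mpr h
    have hsplit : (children T T.root).card
        + ∑ v ∈ (whiteNodes T black).erase T.root, (children T v).card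
        = ∑ v ∈ whiteNodes T black, (children T v).card :=
      Finset.add_sum_erase _ (fun v => (children T v).card) hrw
    have herase : 2 * (W - 1) ≤ ∑ v ∈ (whiteNodes T black).erase T.root, (children T v).card := by
      have hcarde : ((whiteNodes T black).erase T.root).card = W - 1 :=
        Finset.card_erase_of_mem hrw
      calc 2 * (W - 1) = ∑ _v ∈ (whiteNodes T black).erase T.root, 2 := by
            rw [Finset.sum_const, hcarde]; ring
        _ ≤ _ := by
            apply Finset.sum_le_sum
            intro v hv
            exact hwhite2 v (Finset.mem_of_mem_erase hv) (Finset.ne_of_mem_erase hv)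
    have hWpos : 1 ≤ W := Finset.card_pos.mpr ⟨T.root, hrw⟩
    constructor
    · omega
    · intro hh
      rcases hh with hh | hh
      · exact absurd hh hroot
      · omega
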